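/- For μ > 0 and any continuous real function E on T^d with maximum E_max, the function z ↦ Δ_μ(z) = 1 + μ ∫_{T^d} η(dq)/(E(q) - z) is strictly increasing on (E_max, ∞), tends to 1 as z → +∞, and tends to -∞ as z ↓ E_max when d ≤ 2 (since ∫ η(dq)/(E_max - E(q)) = +∞ for the lattice dispersion); hence Δ_μ has a unique zero e_μ > E_max. -/

import Mathlib

open MeasureTheory Real

instance : Fact (0 < 2 * π) := ⟨by positivity⟩

/-- Equip the circle `ℝ/2πℤ` with its Haar measure. -/
noncomputable instance : MeasureSpace Real.Angle :=
  inferInstanceAs (MeasureSpace (AddCircle (2 * π)))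

instance : SigmaFinite (volume : Measure Real.Angle) :=
  inferInstanceAs (SigmaFinite (volume : Measure (AddCircle (2 * π))))

/-- The lattice dispersion relation `ε(p) = 2∑ᵢ (1 - cos pⁱ)` on the torus `T^d`. -/
noncomputable def eps (d : ℕ) (p : Fin d → Real.Angle) : ℝ :=
  2 * ∑ i, (1 - (p i).cos)

/-- The normalized Haar measure `η` on the torus `T^d`. -/
noncomputable def haarT (d : ℕ) : Measure (Fin d → Real.Angle) :=
  (ENNReal.ofReal ((2 * π) ^ d))⁻¹ • volume

/-- The two-particle dispersion `E_{γ,k}(q) = ε(q) + γ ε(k - q)`. -/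
noncomputable def E2 (d : ℕ) (γ : ℝ) (k q : Fin d → Real.Angle) : ℝ :=
  eps d q + γ * eps d (k - q)

instance : CompactSpace Real.Angle := inferInstanceAs (CompactSpace (AddCircle (2 * π)))
instance : BorelSpace Real.Angle := inferInstanceAs (BorelSpace (AddCircle (2 * π)))
instance : SecondCountableTopology Real.Angle :=
  inferInstanceAs (SecondCountableTopology (AddCircle (2 * π)))

open Filter Set Metric

lemma angle_rep (x : Real.Angle) : ∃ h : ℝ, (↑h : Real.Angle) = x ∧ |h| = ‖x‖ := by
  induction x using Real.Angle.induction_on with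
  | _ y =>
    refine ⟨y - ↑(round ((2 * π)⁻¹ * y)) * (2 * π), ?_, (AddCircle.norm_eq (2*π)).symm⟩
    rw [Real.Angle.coe_sub]
    have : ((↑(round ((2 * π)⁻¹ * y)) * (2 * π) : ℝ) : Real.Angle) = 0 := by
      rw [Real.Angle.intCast_mul_eq_zsmul, Real.Angle.coe_two_pi, smul_zero]
    rw [this, sub_zero]

lemma haarT_univ (d : ℕ) : haarT d Set.univ = 1 := by
  have h1 : (volume : Measure (Fin d → Real.Angle)) Set.univ = (ENNReal.ofReal (2*π))^d := by
    rw [MeasureTheory.volume_pi, ← Set.pi_univ Set.univ, Measure.pi_pi]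
    rw [show (volume : Measure Real.Angle) Set.univ = ENNReal.ofReal (2*π) from
      AddCircle.measure_univ (2*π), Finset.prod_const, Finset.card_univ, Fintype.card_fin]
  rw [haarT, Measure.smul_apply, smul_eq_mul, h1, ← ENNReal.ofReal_pow (by positivity)]
  exact ENNReal.inv_mul_cancel (by positivity) (ENNReal.ofReal_ne_top)

instance (d : ℕ) : IsProbabilityMeasure (haarT d) := ⟨haarT_univ d⟩

lemma contE (d : ℕ) (γ : ℝ) (k : Fin d → Real.Angle) : Continuous (E2 d γ k) := by
  have h1 : Continuous (eps d) := by
    unfold eps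
    exact continuous_const.mul (continuous_finset_sum _ fun i _ =>
      continuous_const.sub (Real.Angle.continuous_cos.comp (continuous_apply i)))
  exact h1.add (continuous_const.mul (h1.comp (continuous_const.sub continuous_id)))

lemma integrable_cont (d : ℕ) {f : (Fin d → Real.Angle) → ℝ} (hf : Continuous f) :
    Integrable f (haarT d) := by
  obtain ⟨q0, -, hq0⟩ := isCompact_univ.exists_isMaxOn Set.univ_nonempty
    hf.norm.continuousOn
  exact ⟨hf.aestronglyMeasurable, HasFiniteIntegral.of_bounded
    (C := ‖f q0‖) (Filter.Eventually.of_forall fun q => hq0 (Set.mem_univ q))⟩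

lemma oneD (γ A B : ℝ) (hγ : 0 ≤ γ)
    (hmax : ∀ s : ℝ, 2*(1 - Real.cos (A + s)) + 2*γ*(1 - Real.cos (B - s)) ≤
      2*(1 - Real.cos A) + 2*γ*(1 - Real.cos B)) (t : ℝ) :
    (2*(1 - Real.cos A) + 2*γ*(1 - Real.cos B)) -
      (2*(1 - Real.cos (A + t)) + 2*γ*(1 - Real.cos (B - t))) ≤ (1+γ) * t^2 := by
  set C : ℝ := 2*Real.cos A + 2*γ*Real.cos B with hC
  set D : ℝ := -2*Real.sin A + 2*γ*Real.sin B with hD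
  set φ : ℝ → ℝ := fun s => C*(Real.cos s - 1) + D*Real.sin s with hφ
  have hid : ∀ s : ℝ, (2*(1 - Real.cos A) + 2*γ*(1 - Real.cos B)) -
      (2*(1 - Real.cos (A + s)) + 2*γ*(1 - Real.cos (B - s))) = φ s := by
    intro s
    simp only [hφ, hC, hD, Real.cos_add, Real.cos_sub]
    ring
  have hφ0 : ∀ s, 0 ≤ φ s := fun s => (hid s) ▸ (by linarith [hmax s])
  have hmin : IsLocalMin φ 0 := by
    have h0 : φ 0 = 0 := by simp [hφ]
    exact Filter.Eventually.of_forall fun s => by rw [h0]; exact hφ0 s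
  have hderiv : HasDerivAt φ D 0 := by
    have h1 : HasDerivAt (fun s : ℝ => C * (Real.cos s - 1)) (C * (-Real.sin 0)) 0 :=
      ((Real.hasDerivAt_cos 0).sub_const 1).const_mul C
    have h2 : HasDerivAt (fun s : ℝ => D * Real.sin s) (D * Real.cos 0) 0 :=
      (Real.hasDerivAt_sin 0).const_mul D
    have := h1.add h2
    simp at this; exact this
  have hD0 : D = 0 := by
    have := hmin.deriv_eq_zero
    rwa [hderiv.deriv] at this
  rw [hid t]
  have h1 : 1 - t^2/2 ≤ Real.cos t := Real.one_sub_sq_div_two_le_cos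
  have h2 : Real.cos t ≤ 1 := Real.cos_le_one t
  have hcA1 := Real.neg_one_le_cos A
  have hcA2 := Real.cos_le_one A
  have hcB1 := Real.neg_one_le_cos B
  have hcB2 := Real.cos_le_one B
  have hCub : C ≤ 2 + 2*γ := by rw [hC]; nlinarith
  have hClb : -(2 + 2*γ) ≤ C := by rw [hC]; nlinarith
  show C*(Real.cos t - 1) + D*Real.sin t ≤ (1+γ) * t^2
  rw [hD0]
  nlinarith [mul_nonneg (by linarith : (0:ℝ) ≤ 2 + 2*γ + C) (by linarith : (0:ℝ) ≤ 1 - Real.cos t),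
    mul_nonneg (by linarith : (0:ℝ) ≤ 2 + 2*γ) (by linarith : (0:ℝ) ≤ t^2/2 - (1 - Real.cos t))]

lemma decomp (d : ℕ) (γ : ℝ) (a b h : Fin d → ℝ) :
    E2 d γ (fun i => ↑(b i)) (fun i => ↑(a i + h i)) =
      ∑ i, (2*(1 - Real.cos (a i + h i)) + 2*γ*(1 - Real.cos ((b i - a i) - h i))) := by
  unfold E2 eps
  have hsub : (fun i => (↑(b i) : Real.Angle)) - (fun i => (↑(a i + h i) : Real.Angle)) =
      fun i => (↑((b i - a i) - h i) : Real.Angle) := by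
    funext i
    simp only [Pi.sub_apply, ← Real.Angle.coe_sub]
    congr 1
    ring
  rw [hsub]
  simp only [Real.Angle.cos_coe, Finset.mul_sum, ← Finset.sum_add_distrib]
  exact Finset.sum_congr rfl fun i _ => by ring

lemma quad_bound (d : ℕ) (γ : ℝ) (hγ : 0 < γ) (k q0 : Fin d → Real.Angle)
    (hq0 : ∀ q, E2 d γ k q ≤ E2 d γ k q0) (a b : Fin d → ℝ)
    (ha : ∀ i, (↑(a i) : Real.Angle) = q0 i) (hb : ∀ i, (↑(b i) : Real.Angle) = k i)
    (h : Fin d → ℝ) :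
    E2 d γ k q0 - E2 d γ k (fun i => ↑(a i + h i)) ≤ (1+γ) * ∑ i, (h i)^2 := by
  set g : Fin d → ℝ → ℝ := fun i t =>
    2*(1 - Real.cos (a i + t)) + 2*γ*(1 - Real.cos ((b i - a i) - t)) with hg
  have hk : k = fun i => (↑(b i) : Real.Angle) := by funext i; exact (hb i).symm
  have hdec : ∀ x : Fin d → ℝ, E2 d γ k (fun i => ↑(a i + x i)) = ∑ i, g i (x i) := by
    intro x; rw [hk]; exact decomp d γ a b x
  have hq0' : q0 = fun i => (↑(a i + (0:ℝ)) : Real.Angle) := by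
    funext i; rw [add_zero]; exact (ha i).symm
  have hE0 : E2 d γ k q0 = ∑ i, g i 0 := by
    conv_lhs => rw [hq0']
    simpa using hdec 0
  have hmaxG : ∀ x : Fin d → ℝ, ∑ i, g i (x i) ≤ ∑ i, g i 0 := by
    intro x; rw [← hdec x, ← hE0]; exact hq0 _
  have hper : ∀ (i : Fin d) (t : ℝ), g i t ≤ g i 0 := by
    intro i t
    have h1 := hmaxG (Function.update (0 : Fin d → ℝ) i t)
    have h2 : ∑ j, (g j (Function.update (0 : Fin d → ℝ) i t j) - g j 0) = g i t - g i 0 := by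
      calc ∑ j, (g j (Function.update (0 : Fin d → ℝ) i t j) - g j 0)
          = g i (Function.update (0 : Fin d → ℝ) i t i) - g i 0 :=
            Finset.sum_eq_single i (fun j _ hj => by simp [Function.update_of_ne hj])
              (fun hi => absurd (Finset.mem_univ i) hi)
        _ = g i t - g i 0 := by rw [Function.update_self]
    rw [Finset.sum_sub_distrib] at h2
    linarith
  have hg0 : ∀ i, g i 0 = 2*(1 - Real.cos (a i)) + 2*γ*(1 - Real.cos (b i - a i)) := by
    intro i; simp [hg]
  calc E2 d γ k q0 - E2 d γ k (fun i => ↑(a i + h i))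
      = ∑ i, g i 0 - ∑ i, g i (h i) := by rw [hE0, hdec]
    _ = ∑ i, (g i 0 - g i (h i)) := (Finset.sum_sub_distrib _ _).symm
    _ ≤ ∑ i, (1+γ)*(h i)^2 := by
        refine Finset.sum_le_sum fun i _ => ?_
        have hmax1 : ∀ s : ℝ, 2*(1 - Real.cos (a i + s)) + 2*γ*(1 - Real.cos ((b i - a i) - s)) ≤
            2*(1 - Real.cos (a i)) + 2*γ*(1 - Real.cos (b i - a i)) := by
          intro s
          have := hper i s
          rw [hg0 i] at this
          simpa [hg] using this
        have := oneD γ (a i) (b i - a i) hγ.le hmax1 (h i)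
        rw [← hg0 i] at this
        simpa [hg] using this
    _ = (1+γ) * ∑ i, (h i)^2 := (Finset.mul_sum _ _ _).symm

lemma meas_bound (d : ℕ) (hd : d = 1 ∨ d = 2) (γ : ℝ) (hγ : 0 < γ)
    (k q0 : Fin d → Real.Angle) (hq0 : ∀ q, E2 d γ k q ≤ E2 d γ k q0)
    {t : ℝ} (ht : 0 < t) (ht1 : t ≤ 1) :
    ENNReal.ofReal ((2*(1+γ)*d * π^d)⁻¹ * t) ≤
      haarT d {q | E2 d γ k q0 - E2 d γ k q < t} := by
  choose a ha1 ha2 using fun i => angle_rep (q0 i)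
  choose b hb1 hb2 using fun i => angle_rep (k i)
  have hd1 : 1 ≤ (d:ℝ) := by rcases hd with h|h <;> subst h <;> norm_num
  set c₀ : ℝ := 2*(1+γ)*d with hc₀def
  have hc₀2 : 2 ≤ c₀ := by nlinarith
  have hc₀ : 0 < c₀ := by linarith
  set r : ℝ := Real.sqrt (t / c₀) with hrdef
  have hr0 : 0 ≤ r := Real.sqrt_nonneg _
  have hrsq : r^2 = t / c₀ := Real.sq_sqrt (by positivity)
  have htc : t / c₀ ≤ 1/2 := by
    rw [div_le_div_iff₀ hc₀ two_pos]; nlinarith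
  have hr1 : r < 1 := by
    rw [hrdef, show (1:ℝ) = Real.sqrt 1 from (Real.sqrt_one).symm]
    exact Real.sqrt_lt_sqrt (by positivity) (by linarith)
  have hrπ : r ≤ π := le_of_lt (lt_of_lt_of_le hr1 (by linarith [Real.pi_gt_three]))
  have hsub : Set.pi Set.univ (fun i => Metric.closedBall (q0 i) r) ⊆
      {q | E2 d γ k q0 - E2 d γ k q < t} := by
    intro q hq
    choose x hx1 hx2 using fun i => angle_rep (q i - q0 i)
    have hxr : ∀ i, |x i| ≤ r := by
      intro i
      rw [hx2 i, ← dist_eq_norm]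
      exact hq i (Set.mem_univ i)
    have hqx : q = fun i => (↑(a i + x i) : Real.Angle) := by
      funext i
      have : (↑(a i + x i) : Real.Angle) = q i := by
        rw [Real.Angle.coe_add, ha1 i, hx1 i]; abel
      exact this.symm
    have hquad := quad_bound d γ hγ k q0 hq0 a b ha1 hb1 x
    rw [← hqx] at hquad
    have hsum : ∑ i, (x i)^2 ≤ d * r^2 := by
      calc ∑ i, (x i)^2 ≤ ∑ _i : Fin d, r^2 := by
            refine Finset.sum_le_sum fun i _ => ?_
            have h1 := hxr i
            nlinarith [abs_nonneg (x i), sq_abs (x i)]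
        _ = d * r^2 := by
            rw [Finset.sum_const, Finset.card_univ, Fintype.card_fin, nsmul_eq_mul]
    have heq : (1+γ) * (d * (t / c₀)) = t/2 := by
      rw [hc₀def]; field_simp
    have : E2 d γ k q0 - E2 d γ k q ≤ t/2 := by
      calc E2 d γ k q0 - E2 d γ k q ≤ (1+γ) * ∑ i, (x i)^2 := hquad
        _ ≤ (1+γ) * (d * r^2) := by nlinarith
        _ = t/2 := by rw [hrsq]; exact heq
    have : E2 d γ k q0 - E2 d γ k q < t := by linarith
    exact this
  refine le_trans ?_ (measure_mono hsub)
  have hone : ∀ y : Real.Angle, volume (Metric.closedBall y r) = ENNReal.ofReal (2*r) := by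
    intro y
    rw [show (volume (Metric.closedBall y r)) = ENNReal.ofReal (2*π ⊓ 2*r) from
      AddCircle.volume_closedBall (2*π) r]
    congr 1
    exact min_eq_right (by linarith)
  have hB : haarT d (Set.pi Set.univ fun i => Metric.closedBall (q0 i) r)
      = ENNReal.ofReal ((2*r)^d / (2*π)^d) := by
    rw [haarT, Measure.smul_apply, smul_eq_mul, MeasureTheory.volume_pi, Measure.pi_pi]
    simp only [hone, Finset.prod_const, Finset.card_univ, Fintype.card_fin]
    rw [← ENNReal.ofReal_pow (by positivity : (0:ℝ) ≤ 2*r),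
      ENNReal.ofReal_div_of_pos (by positivity : (0:ℝ) < (2*π)^d), ENNReal.div_eq_inv_mul]
  rw [hB]
  apply ENNReal.ofReal_le_ofReal
  have hrd : t / c₀ ≤ r^d := by
    rcases hd with h|h <;> subst h
    · rw [pow_one]; nlinarith
    · rw [← hrsq]
  have h2 : (2*r)^d/(2*π)^d = r^d/π^d := by
    rw [mul_pow, mul_pow, mul_div_mul_left _ _ (by positivity : ((2:ℝ))^d ≠ 0)]
  rw [h2]
  have hπd : (0:ℝ) < π^d := by positivity
  calc (2*(1+γ)*↑d * π^d)⁻¹ * t = (t/c₀)/π^d := by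
        rw [hc₀def]; field_simp
    _ ≤ r^d/π^d := by gcongr

lemma lintegral_top (d : ℕ) (hd : d = 1 ∨ d = 2) (γ : ℝ) (hγ : 0 < γ)
    (k q0 : Fin d → Real.Angle) (hq0 : ∀ q, E2 d γ k q ≤ E2 d γ k q0) :
    ∫⁻ q, (ENNReal.ofReal (E2 d γ k q0 - E2 d γ k q))⁻¹ ∂(haarT d) = ⊤ := by
  set E := E2 d γ k with hE
  set η := haarT d with hη
  set M := E2 d γ k q0 with hM
  have hEmeas : Measurable E := (contE d γ k).measurable
  have hd1 : 1 ≤ (d:ℝ) := by rcases hd with h|h <;> subst h <;> norm_num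
  by_cases hN : η {q | E q = M} = 0
  · have hfnn : 0 ≤ᵐ[η] fun q => (M - E q)⁻¹ :=
      Filter.Eventually.of_forall fun q => inv_nonneg.2 (sub_nonneg.2 (hq0 q))
    have hfm : AEMeasurable (fun q => (M - E q)⁻¹) η :=
      ((measurable_const.sub hEmeas).inv).aemeasurable
    have hae : ∀ᵐ q ∂η, E q ≠ M := by
      rw [ae_iff]
      simpa using hN
    have hcong : (fun q => (ENNReal.ofReal (M - E q))⁻¹) =ᵐ[η]
        fun q => ENNReal.ofReal ((M - E q)⁻¹) := by
      filter_upwards [hae] with q hq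
      have hpos : 0 < M - E q :=
        lt_of_le_of_ne (sub_nonneg.2 (hq0 q)) (fun hcontra => hq (by linarith))
      exact (ENNReal.ofReal_inv_of_pos hpos).symm
    rw [lintegral_congr_ae hcong,
      MeasureTheory.lintegral_eq_lintegral_meas_lt η hfnn hfm]
    set c : ℝ := (2*(1+γ)*d * π^d)⁻¹ with hcdef
    have hcpos : 0 < c := by
      rw [hcdef]
      have : (0:ℝ) < 2*(1+γ)*d * π^d := by positivity
      positivity
    have hkey : ∀ s : ℝ, 1 ≤ s →
        ENNReal.ofReal (c * s⁻¹) ≤ η {q | s < (M - E q)⁻¹} := by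
      intro s hs
      have hs0 : 0 < s := lt_of_lt_of_le one_pos hs
      have ht : 0 < s⁻¹ := inv_pos.2 hs0
      have ht1 : s⁻¹ ≤ 1 := inv_le_one_of_one_le₀ hs
      have hmb := meas_bound d hd γ hγ k q0 hq0 ht ht1
      have hincl : {q | E2 d γ k q0 - E2 d γ k q < s⁻¹} \ {q | E q = M} ⊆
          {q | s < (M - E q)⁻¹} := by
        rintro q ⟨hq1, hq2⟩
        have hne : E q ≠ M := hq2
        have hpos : 0 < M - E q :=
          lt_of_le_of_ne (sub_nonneg.2 (hq0 q)) (fun hcontra => hne (by linarith))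
        exact (lt_inv_comm₀ hs0 hpos).mpr hq1
      calc ENNReal.ofReal (c * s⁻¹) ≤ η {q | E2 d γ k q0 - E2 d γ k q < s⁻¹} := hmb
        _ = η ({q | E2 d γ k q0 - E2 d γ k q < s⁻¹} \ {q | E q = M}) :=
            (measure_diff_null hN).symm
        _ ≤ η {q | s < (M - E q)⁻¹} := measure_mono hincl
    have htop : ∫⁻ s in Set.Ioi (1:ℝ), ENNReal.ofReal (c * s⁻¹) ∂volume = ⊤ := by
      by_contra hfin
      have hfin' : ∫⁻ s in Set.Ioi (1:ℝ), ENNReal.ofReal (c * s⁻¹) ∂volume < ⊤ :=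
        lt_top_iff_ne_top.2 hfin
      have hnn : 0 ≤ᵐ[volume.restrict (Set.Ioi (1:ℝ))] fun s => c * s⁻¹ := by
        refine (ae_restrict_iff' measurableSet_Ioi).2 (Filter.Eventually.of_forall fun s hs => ?_)
        have : (0:ℝ) < s := lt_trans one_pos (Set.mem_Ioi.1 hs)
        positivity
      have hint : IntegrableOn (fun s => c * s⁻¹) (Set.Ioi (1:ℝ)) volume :=
        ⟨(measurable_const.mul measurable_inv).aestronglyMeasurable,
          (hasFiniteIntegral_iff_ofReal hnn).2 hfin'⟩
      have hint2 : IntegrableOn (fun s : ℝ => s⁻¹) (Set.Ioi (1:ℝ)) volume := by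
        have h1 := hint.const_mul c⁻¹
        have heq : (fun s : ℝ => c⁻¹ * (c * s⁻¹)) = fun s : ℝ => s⁻¹ := by
          funext s
          rw [← mul_assoc, inv_mul_cancel₀ (ne_of_gt hcpos), one_mul]
        rwa [heq] at h1
      have hint3 : IntegrableOn (fun s : ℝ => s ^ (-1 : ℝ)) (Set.Ioi (1:ℝ)) volume :=
        hint2.congr_fun (fun s hs => (Real.rpow_neg_one s).symm) measurableSet_Ioi
      rw [integrableOn_Ioi_rpow_iff zero_lt_one] at hint3
      linarith
    refine top_unique ?_
    calc (⊤ : ENNReal) = ∫⁻ s in Set.Ioi (1:ℝ), ENNReal.ofReal (c * s⁻¹) ∂volume := htop.symm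
      _ ≤ ∫⁻ s in Set.Ioi (1:ℝ), η {q | s < (M - E q)⁻¹} ∂volume :=
          lintegral_mono_ae ((ae_restrict_iff' measurableSet_Ioi).2
            (Filter.Eventually.of_forall fun s hs => hkey s (le_of_lt (Set.mem_Ioi.1 hs))))
      _ ≤ ∫⁻ s in Set.Ioi (0:ℝ), η {q | s < (M - E q)⁻¹} ∂volume :=
          lintegral_mono' (Measure.restrict_mono (Set.Ioi_subset_Ioi zero_le_one) le_rfl)
            (fun _ => le_rfl)
  · have hNm : MeasurableSet {q | E q = M} := hEmeas (measurableSet_singleton M)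
    refine top_unique ?_
    calc (⊤ : ENNReal) = ⊤ * η {q | E q = M} := (ENNReal.top_mul hN).symm
      _ = ∫⁻ _ in {q | E q = M}, ⊤ ∂η := (setLIntegral_const _ _).symm
      _ = ∫⁻ q in {q | E q = M}, (ENNReal.ofReal (M - E q))⁻¹ ∂η := by
          refine (setLIntegral_congr_fun hNm (fun q hq => ?_)).symm
          have : E q = M := hq
          simp [this]
      _ ≤ ∫⁻ q, (ENNReal.ofReal (M - E q))⁻¹ ∂η := setLIntegral_le_lintegral _ _

/-- for `μ > 0`, `Δ_μ(z) = 1 + μ ∫ (E(q) - z)⁻¹ η(dq)` is strictly increasing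
on `(E_max, ∞)`, tends to `1` at `+∞` and to `-∞` as `z ↓ E_max` (for `d = 1, 2`);
hence it has a unique zero `e_μ > E_max`. -/
theorem stmt4 (d : ℕ) (hd : d = 1 ∨ d = 2) (γ μ : ℝ) (hγ : 0 < γ) (hμ : 0 < μ)
    (k : Fin d → Real.Angle) (hnc : ∃ q q', E2 d γ k q ≠ E2 d γ k q') :
    let Emax := sSup (Set.range (E2 d γ k))
    let Δ : ℝ → ℝ := fun z => 1 + μ * ∫ q, (E2 d γ k q - z)⁻¹ ∂(haarT d)
    StrictMonoOn Δ (Set.Ioi Emax) ∧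
    Filter.Tendsto Δ Filter.atTop (nhds 1) ∧
    Filter.Tendsto Δ (nhdsWithin Emax (Set.Ioi Emax)) Filter.atBot ∧
    ∃! e, e ∈ Set.Ioi Emax ∧ Δ e = 0 := by
  clear hnc
  intro Emax Δ
  have hΔdef : ∀ z, Δ z = 1 + μ * ∫ q, (E2 d γ k q - z)⁻¹ ∂(haarT d) := fun z => rfl
  have hEmeas : Measurable (E2 d γ k) := (contE d γ k).measurable
  obtain ⟨q0, -, hq0'⟩ := isCompact_univ.exists_isMaxOn Set.univ_nonempty
    (contE d γ k).continuousOn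
  have hq0 : ∀ q, E2 d γ k q ≤ E2 d γ k q0 := fun q => hq0' (Set.mem_univ q)
  have hEmax : Emax = E2 d γ k q0 := by
    have hgr : IsGreatest (Set.range (E2 d γ k)) (E2 d γ k q0) :=
      ⟨⟨q0, rfl⟩, by rintro _ ⟨q, rfl⟩; exact hq0 q⟩
    exact hgr.csSup_eq
  have hsub_pos : ∀ z, Emax < z → ∀ q, 0 < z - E2 d γ k q := by
    intro z hz q
    rw [hEmax] at hz
    have := hq0 q
    linarith
  have hint : ∀ z, Emax < z → Integrable (fun q => (z - E2 d γ k q)⁻¹) (haarT d) := by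
    intro z hz
    exact integrable_cont d ((continuous_const.sub (contE d γ k)).inv₀
      (fun q => ne_of_gt (hsub_pos z hz q)))
  have hIdent : ∀ z : ℝ, (fun q => (E2 d γ k q - z)⁻¹) = fun q => -((z - E2 d γ k q)⁻¹) := by
    intro z
    funext q
    rw [← neg_sub z (E2 d γ k q), inv_neg]
  have hΔ : ∀ z, Δ z = 1 - μ * ∫ q, (z - E2 d γ k q)⁻¹ ∂(haarT d) := by
    intro z
    rw [hΔdef z, hIdent z, integral_neg]
    ring
  -- Strict monotonicity
  have hmono : StrictMonoOn Δ (Set.Ioi Emax) := by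
    intro z hz z' hz' hlt
    rw [hΔ z, hΔ z']
    have hdiff : 0 < ∫ q, ((z - E2 d γ k q)⁻¹ - (z' - E2 d γ k q)⁻¹) ∂(haarT d) := by
      have hnn : 0 ≤ᵐ[haarT d] fun q => (z - E2 d γ k q)⁻¹ - (z' - E2 d γ k q)⁻¹ :=
        Filter.Eventually.of_forall fun q => sub_nonneg.2
          (inv_anti₀ (hsub_pos z hz q) (by linarith))
      have hintd : Integrable (fun q => (z - E2 d γ k q)⁻¹ - (z' - E2 d γ k q)⁻¹) (haarT d) :=
        (hint z hz).sub (hint z' (Set.mem_Ioi.1 hz'))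
      rw [integral_pos_iff_support_of_nonneg_ae hnn hintd]
      have hsupp : Function.support
          (fun q => (z - E2 d γ k q)⁻¹ - (z' - E2 d γ k q)⁻¹) = Set.univ :=
        Set.eq_univ_of_forall fun q => sub_ne_zero.2
          (ne_of_gt (inv_strictAnti₀ (hsub_pos z hz q) (by linarith)))
      rw [hsupp]
      simp [haarT_univ]
    rw [integral_sub (hint z hz) (hint z' (Set.mem_Ioi.1 hz'))] at hdiff
    nlinarith
  -- Tendsto at +infinity
  have hbound : ∀ z, Emax < z → ‖∫ q, (E2 d γ k q - z)⁻¹ ∂(haarT d)‖ ≤ (z - Emax)⁻¹ := by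
    intro z hz
    have h1 : ∀ᵐ q ∂(haarT d), ‖(E2 d γ k q - z)⁻¹‖ ≤ (z - Emax)⁻¹ := by
      refine Filter.Eventually.of_forall fun q => ?_
      rw [norm_inv, Real.norm_eq_abs, abs_sub_comm, abs_of_pos (hsub_pos z hz q)]
      refine inv_anti₀ (by linarith) ?_
      rw [hEmax]
      linarith [hq0 q]
    calc ‖∫ q, (E2 d γ k q - z)⁻¹ ∂(haarT d)‖
        ≤ (z - Emax)⁻¹ * ((haarT d) Set.univ).toReal := norm_integral_le_of_norm_le_const h1
      _ = (z - Emax)⁻¹ := by simp [haarT_univ]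
  have htend1 : Filter.Tendsto Δ Filter.atTop (nhds 1) := by
    have h0 : Filter.Tendsto (fun z => ∫ q, (E2 d γ k q - z)⁻¹ ∂(haarT d))
        Filter.atTop (nhds 0) := by
      refine squeeze_zero_norm' ((eventually_gt_atTop Emax).mono fun z hz => hbound z hz) ?_
      have : Filter.Tendsto (fun z : ℝ => z - Emax) Filter.atTop Filter.atTop :=
        tendsto_atTop_add_const_right Filter.atTop (-Emax) tendsto_id
      exact tendsto_inv_atTop_zero.comp this
    have h2 : Filter.Tendsto (fun z => 1 + μ * ∫ q, (E2 d γ k q - z)⁻¹ ∂(haarT d))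
        Filter.atTop (nhds (1 + μ * 0)) := tendsto_const_nhds.add (h0.const_mul μ)
    simpa using h2
  -- Relation with lintegral
  have hFz : ∀ z, Emax < z → ∫⁻ q, (ENNReal.ofReal (z - E2 d γ k q))⁻¹ ∂(haarT d)
      = ENNReal.ofReal (∫ q, (z - E2 d γ k q)⁻¹ ∂(haarT d)) := by
    intro z hz
    rw [MeasureTheory.ofReal_integral_eq_lintegral_ofReal (hint z hz)
      (Filter.Eventually.of_forall fun q => inv_nonneg.2 (hsub_pos z hz q).le)]
    exact lintegral_congr fun q => (ENNReal.ofReal_inv_of_pos (hsub_pos z hz q)).symm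
  -- Tendsto at Emax from the right
  have hFtop : ∫⁻ q, (ENNReal.ofReal (Emax - E2 d γ k q))⁻¹ ∂(haarT d) = ⊤ := by
    rw [hEmax]
    exact lintegral_top d hd γ hγ k q0 hq0
  have hFtend : Filter.Tendsto
      (fun n : ℕ => ∫⁻ q, (ENNReal.ofReal (Emax + ((n:ℝ)+1)⁻¹ - E2 d γ k q))⁻¹ ∂(haarT d))
      Filter.atTop (nhds (∫⁻ q, (ENNReal.ofReal (Emax - E2 d γ k q))⁻¹ ∂(haarT d))) := by
    apply lintegral_tendsto_of_tendsto_of_monotone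
    · exact fun n => ((measurable_const.sub hEmeas).ennreal_ofReal.inv).aemeasurable
    · refine Filter.Eventually.of_forall fun q n m hnm => ?_
      refine ENNReal.inv_le_inv.2 (ENNReal.ofReal_le_ofReal ?_)
      have h1 : ((m:ℝ)+1)⁻¹ ≤ ((n:ℝ)+1)⁻¹ := by
        refine inv_anti₀ (by positivity) ?_
        have : (n:ℝ) ≤ (m:ℝ) := Nat.cast_le.2 hnm
        linarith
      linarith
    · refine Filter.Eventually.of_forall fun q => ?_
      have h1 : Filter.Tendsto (fun n : ℕ => Emax + ((n:ℝ)+1)⁻¹ - E2 d γ k q)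
          Filter.atTop (nhds (Emax - E2 d γ k q)) := by
        have h2 : Filter.Tendsto (fun n : ℕ => ((n:ℝ)+1)⁻¹) Filter.atTop (nhds 0) := by
          simpa only [one_div] using (tendsto_one_div_add_atTop_nhds_zero_nat :
            Filter.Tendsto (fun n : ℕ => 1 / ((n:ℝ)+1)) Filter.atTop (nhds 0))
        have h3 : Filter.Tendsto (fun n : ℕ => Emax + ((n:ℝ)+1)⁻¹ - E2 d γ k q)
            Filter.atTop (nhds (Emax + 0 - E2 d γ k q)) :=
          ((tendsto_const_nhds (x := Emax)).add h2).sub tendsto_const_nhds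
        simpa using h3
      exact ENNReal.tendsto_inv_iff.2 ((ENNReal.continuous_ofReal.tendsto _).comp h1)
  have htend2 : Filter.Tendsto Δ (nhdsWithin Emax (Set.Ioi Emax)) Filter.atBot := by
    rw [Filter.tendsto_atBot]
    intro b
    set C : ℝ := max 1 ((1 - b)/μ) with hCdef
    have hev : ∀ᶠ n : ℕ in Filter.atTop, ENNReal.ofReal C <
        ∫⁻ q, (ENNReal.ofReal (Emax + ((n:ℝ)+1)⁻¹ - E2 d γ k q))⁻¹ ∂(haarT d) := by
      refine hFtend.eventually ?_
      rw [hFtop]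
      exact eventually_gt_nhds ENNReal.ofReal_lt_top
    obtain ⟨n, hn⟩ := hev.exists
    have hzn : Emax < Emax + ((n:ℝ)+1)⁻¹ := lt_add_of_pos_right _ (by positivity)
    filter_upwards [Ioo_mem_nhdsGT_of_mem (Set.mem_Ico.2 ⟨le_refl Emax, hzn⟩)] with z hz
    obtain ⟨hz1, hz2⟩ := hz
    have hanti : ∫⁻ q, (ENNReal.ofReal (Emax + ((n:ℝ)+1)⁻¹ - E2 d γ k q))⁻¹ ∂(haarT d)
        ≤ ∫⁻ q, (ENNReal.ofReal (z - E2 d γ k q))⁻¹ ∂(haarT d) :=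
      lintegral_mono fun q => ENNReal.inv_le_inv.2 (ENNReal.ofReal_le_ofReal (by linarith))
    have hlt : ENNReal.ofReal C < ENNReal.ofReal (∫ q, (z - E2 d γ k q)⁻¹ ∂(haarT d)) := by
      rw [← hFz z hz1]
      exact lt_of_lt_of_le hn hanti
    have hCI : C < ∫ q, (z - E2 d γ k q)⁻¹ ∂(haarT d) := by
      by_contra hcon
      exact absurd (ENNReal.ofReal_le_ofReal (not_lt.1 hcon)) (not_le.2 hlt)
    rw [hΔ z]
    have hC1 : (1 - b)/μ ≤ C := le_max_right _ _
    have h3 := (div_lt_iff₀ hμ).1 (lt_of_le_of_lt hC1 hCI)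
    nlinarith
  -- Unique zero
  have hcontΔ : ∀ z ∈ Set.Ioi Emax, ContinuousAt Δ z := by
    intro z hz
    have hz' : Emax < z := hz
    have hδ : 0 < (z - Emax)/2 := by linarith
    have hca : ContinuousAt (fun w => ∫ q, (E2 d γ k q - w)⁻¹ ∂(haarT d)) z := by
      apply MeasureTheory.continuousAt_of_dominated (bound := fun _ => ((z - Emax)/2)⁻¹)
      · exact Filter.Eventually.of_forall fun w =>
          ((hEmeas.sub measurable_const).inv).aestronglyMeasurable
      · filter_upwards [eventually_gt_nhds (show Emax + (z - Emax)/2 < z by linarith)] with w hw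
        refine Filter.Eventually.of_forall fun q => ?_
        have hq : E2 d γ k q ≤ Emax := by rw [hEmax]; exact hq0 q
        have hwq : 0 < w - E2 d γ k q := by linarith
        rw [norm_inv, Real.norm_eq_abs, abs_sub_comm, abs_of_pos hwq]
        exact inv_anti₀ hδ (by linarith)
      · exact integrable_const _
      · refine Filter.Eventually.of_forall fun q => ?_
        have hq : E2 d γ k q ≤ Emax := by rw [hEmax]; exact hq0 q
        exact ((continuous_const.sub continuous_id).continuousAt).inv₀
          (ne_of_lt (by show E2 d γ k q - z < 0; linarith))
    have hcb : ContinuousAt (fun w => 1 + μ * ∫ q, (E2 d γ k q - w)⁻¹ ∂(haarT d)) z :=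
      ContinuousAt.add (continuousAt_const (y := (1:ℝ))) (hca.const_mul μ)
    exact hcb
  obtain ⟨a0, ha0mem, ha0⟩ : ∃ a0, Emax < a0 ∧ Δ a0 < 0 := by
    have h1 : ∀ᶠ z in nhdsWithin Emax (Set.Ioi Emax), Δ z < 0 :=
      htend2.eventually (eventually_lt_atBot 0)
    have h2 : ∀ᶠ z in nhdsWithin Emax (Set.Ioi Emax), Emax < z := eventually_mem_nhdsWithin
    obtain ⟨z, hz1, hz2⟩ := (h2.and h1).exists
    exact ⟨z, hz1, hz2⟩
  obtain ⟨b0, hb0gt, hb0⟩ : ∃ b0, a0 < b0 ∧ 0 < Δ b0 := by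
    have h1 : ∀ᶠ z in Filter.atTop, 0 < Δ z := htend1.eventually (eventually_gt_nhds one_pos)
    obtain ⟨z, hz1, hz2⟩ := ((eventually_gt_atTop a0).and h1).exists
    exact ⟨z, hz1, hz2⟩
  have hconton : ContinuousOn Δ (Set.Icc a0 b0) := fun z hz =>
    (hcontΔ z (lt_of_lt_of_le ha0mem hz.1)).continuousWithinAt
  obtain ⟨e, heIoo, he0⟩ := intermediate_value_Ioo (le_of_lt hb0gt) hconton
    (Set.mem_Ioo.2 ⟨ha0, hb0⟩)
  have hemem : e ∈ Set.Ioi Emax := lt_trans ha0mem heIoo.1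
  refine ⟨hmono, htend1, htend2, e, ⟨hemem, he0⟩, ?_⟩
  rintro e' ⟨he'mem, he'0⟩
  exact hmono.injOn he'mem hemem (by rw [he'0, he0])
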